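/- Let τ₀, u₀, ν, F > 0, r > 0, s ≥ 0, and c > 0, set c_s := τ₀^{-3/2}/√F and df_* := ((s+1)/r)·(u₀/τ₀), and let P(λ,k) := λ² + (r/u₀ − 2ick + νk²/τ₀²)·λ + ik·[(s+1)/τ₀ − cr/u₀ + ik(c² − c_s²) − cνk²/τ₀²]. Suppose c·(df_* − c) > 0 and c² > c_s². Then there exist a real number λ > 0 and a nonzero real number k such that P(λ, k) = 0; that is, the essential spectrum of the constant state intersects the open positive real axis. -/

import Mathlib

set_option maxHeartbeats 1000000 in
/-- If `c·(df_* − c) > 0` and `c² > c_s²`, then the dispersion relation of the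
linearized viscous St. Venant equations has a positive real root at some nonzero
real frequency: the essential spectrum of the constant state intersects the open
positive real axis. -/
theorem stmt7 (τ₀ u₀ ν F r s c : ℝ) (hτ₀ : 0 < τ₀) (hu₀ : 0 < u₀) (hν : 0 < ν)
    (hF : 0 < F) (hr : 0 < r) (hs : 0 ≤ s) (hc : 0 < c)
    (cs : ℝ) (hcs : cs = τ₀ ^ (-(3 : ℝ) / 2) / Real.sqrt F)
    (df : ℝ) (hdf : df = ((s + 1) / r) * (u₀ / τ₀))
    (P : ℂ → ℝ → ℂ)
    (hP : ∀ (lam : ℂ) (k : ℝ), P lam k =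
      lam ^ 2
        + ((r : ℂ) / (u₀ : ℂ) - 2 * Complex.I * (c : ℂ) * (k : ℂ)
            + (ν : ℂ) * (k : ℂ) ^ 2 / (τ₀ : ℂ) ^ 2) * lam
        + Complex.I * (k : ℂ) *
            (((s : ℂ) + 1) / (τ₀ : ℂ) - (c : ℂ) * (r : ℂ) / (u₀ : ℂ)
              + Complex.I * (k : ℂ) * ((c : ℂ) ^ 2 - (cs : ℂ) ^ 2)
              - (c : ℂ) * (ν : ℂ) * (k : ℂ) ^ 2 / (τ₀ : ℂ) ^ 2))
    (hcond1 : c * (df - c) > 0) (hcond2 : c ^ 2 > cs ^ 2) :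
    ∃ (lam : ℝ), 0 < lam ∧ ∃ k : ℝ, k ≠ 0 ∧ P (lam : ℂ) k = 0 := by
  -- `df > c`
  have hdfc : c < df := by nlinarith
  set a : ℝ := (s + 1) / τ₀ - c * r / u₀ with ha_def
  have haeq : a = (r / u₀) * (df - c) := by
    rw [ha_def, hdf]; field_simp
  have ha : 0 < a := by
    rw [haeq]; apply mul_pos (by positivity); linarith
  set b : ℝ := c * ν / τ₀ ^ 2 with hb_def
  have hb : 0 < b := by positivity
  set k₀ : ℝ := Real.sqrt (a / b) with hk₀_def
  have hk₀ : 0 < k₀ := Real.sqrt_pos.2 (by positivity)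
  have hk₀sq : k₀ ^ 2 = a / b := Real.sq_sqrt (by positivity)
  set L : ℝ → ℝ := fun k => (a - b * k ^ 2) / (2 * c) with hL_def
  set g : ℝ → ℝ := fun k =>
    (L k) ^ 2 + (r / u₀ + ν * k ^ 2 / τ₀ ^ 2) * (L k) - k ^ 2 * (c ^ 2 - cs ^ 2)
    with hg_def
  have hcont : ContinuousOn g (Set.Icc 0 k₀) := by
    apply Continuous.continuousOn
    rw [hg_def, hL_def]
    fun_prop
  have hg0 : 0 < g 0 := by
    have hL0 : L 0 = a / (2 * c) := by simp [hL_def]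
    have : 0 < L 0 := by rw [hL0]; positivity
    simp only [hg_def]
    norm_num
    nlinarith [this, mul_pos (div_pos hr hu₀) this]
  have hLk₀ : L k₀ = 0 := by
    rw [hL_def]
    simp only
    rw [hk₀sq]
    field_simp
    ring
  have hgk₀ : g k₀ < 0 := by
    simp only [hg_def, hLk₀]
    have hk₀sq' : (0:ℝ) < k₀ ^ 2 := by positivity
    nlinarith
  have h0mem : (0 : ℝ) ∈ Set.Icc (g k₀) (g 0) := ⟨hgk₀.le, hg0.le⟩
  obtain ⟨k, hkmem, hgk⟩ := intermediate_value_Icc' hk₀.le hcont h0mem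
  obtain ⟨hk0le, hkle⟩ := hkmem
  have hkne : k ≠ 0 := by
    intro h
    rw [h] at hgk
    exact absurd hgk (ne_of_gt hg0)
  have hksq : k ^ 2 ≤ a / b := by
    rw [← hk₀sq]
    exact pow_le_pow_left₀ hk0le hkle 2
  have hbka : b * k ^ 2 ≤ a := by
    have := (le_div_iff₀ hb).1 hksq
    linarith [this, mul_comm (k ^ 2) b]
  have hLnonneg : 0 ≤ L k := by
    rw [hL_def]
    apply div_nonneg (by linarith) (by positivity)
  have hLpos : 0 < L k := by
    rcases lt_or_eq_of_le hLnonneg with h | h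
    · exact h
    · exfalso
      have hk2 : 0 < k ^ 2 := by positivity
      have : g k < 0 := by
        simp only [hg_def, ← h]
        nlinarith [mul_pos hk2 (show (0:ℝ) < c ^ 2 - cs ^ 2 by linarith)]
      rw [hgk] at this
      exact lt_irrefl 0 this
  refine ⟨L k, hLpos, k, hkne, ?_⟩
  -- the two real equations
  have hE1 : (L k) ^ 2 + (r / u₀ + ν * k ^ 2 / τ₀ ^ 2) * (L k)
      - k ^ 2 * (c ^ 2 - cs ^ 2) = 0 := hgk
  have hE2 : 2 * c * (L k) = a - b * k ^ 2 := by
    rw [hL_def]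
    field_simp
  have hE2' : 2 * c * (L k) = (s + 1) / τ₀ - c * r / u₀ - c * ν * k ^ 2 / τ₀ ^ 2 := by
    rw [hE2, ha_def, hb_def]; ring
  have hE1c : ((L k : ℂ)) ^ 2 + ((r : ℂ) / u₀ + (ν : ℂ) * (k : ℂ) ^ 2 / (τ₀ : ℂ) ^ 2) * (L k : ℂ)
      - (k : ℂ) ^ 2 * ((c : ℂ) ^ 2 - (cs : ℂ) ^ 2) = 0 := by
    exact_mod_cast congrArg (Complex.ofReal) hE1
  have hE2c : 2 * (c : ℂ) * (L k : ℂ)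
      = ((s : ℂ) + 1) / (τ₀ : ℂ) - (c : ℂ) * (r : ℂ) / (u₀ : ℂ)
        - (c : ℂ) * (ν : ℂ) * (k : ℂ) ^ 2 / (τ₀ : ℂ) ^ 2 := by
    exact_mod_cast congrArg (Complex.ofReal) hE2'
  rw [hP]
  linear_combination hE1c - Complex.I * (k : ℂ) * hE2c
    + ((k : ℂ) ^ 2 * ((c : ℂ) ^ 2 - (cs : ℂ) ^ 2)) * Complex.I_sq
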